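/- Let k be a field and R = k[x,y]. Let 0 = a_0 < a_1 < ⋯ < a_r and b_0 > b_1 > ⋯ > b_r = 0 be integers satisfying b_0·a_i + a_r·b_i = a_r·b_0 for all i, let I = ⟨x^{a_0}y^{b_0}, …, x^{a_r}y^{b_r}⟩ ⊆ R, and let S = ⟨a_0, …, a_r⟩ and T = ⟨b_0, …, b_r⟩ be the numerical semigroups generated by the exponents. Then there exists an integer L such that for every l ≥ L: I^l equals the ideal generated by all monomials x^s y^t with s ∈ S, t ∈ T, and b_0·s + a_r·t = a_r·b_0·l; moreover (1) if s ∈ S and u ∈ ℕ satisfy b_0·s ≤ a_r·u and b_0·s + a_r·u ≥ a_r·b_0·l, then x^s y^u ∈ I^l, and (2) if t ∈ T and v ∈ ℕ satisfy a_r·t ≤ b_0·v and a_r·t + b_0·v ≥ a_r·b_0·l, then x^v y^t ∈ I^l. -/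

import Mathlib

open MvPolynomial

open Pointwise in
/-- Core lemma: abstract version covering both halves (1) and (2) by symmetry. -/
private lemma aux_stmt12 {R : Type*} [CommRing R] {r : ℕ} (hr : 1 ≤ r) (a b : Fin (r + 1) → ℕ)
    (ha0 : a 0 = 0) (hamono : StrictMono a)
    (hbr : b (Fin.last r) = 0) (hbanti : StrictAnti b)
    (hcond : ∀ i, b 0 * a i + a (Fin.last r) * b i = a (Fin.last r) * b 0)
    (mono : ℕ → ℕ → R) (h1 : mono 0 0 = 1)
    (hmul : ∀ s t s' t', mono s t * mono s' t' = mono (s + s') (t + t'))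
    (I : Ideal R)
    (hI : I = Ideal.span (Set.range fun i => mono (a i) (b i)))
    (C : ℕ) (hC : a (Fin.last r) ≤ C) :
    ∀ l : ℕ, 2 * (C * C * (r + 1)) + 2 ≤ l →
    ∀ s u : ℕ, s ∈ AddSubmonoid.closure (Set.range a) →
      b 0 * s ≤ a (Fin.last r) * u →
      a (Fin.last r) * b 0 * l ≤ b 0 * s + a (Fin.last r) * u →
      mono s u ∈ I ^ l := by
  set A := a (Fin.last r) with hAdef
  set B := b 0 with hBdef
  have h0last : (0 : Fin (r + 1)) < Fin.last r := by
    rw [Fin.lt_def]; simp only [Fin.val_zero, Fin.val_last]; omega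
  have hA : 0 < A := by
    have := hamono h0last; omega
  have hB : 0 < B := by
    have := hbanti h0last; omega
  -- mono powers
  have mono_pow : ∀ x y k : ℕ, mono x y ^ k = mono (k * x) (k * y) := by
    intro x y k
    induction k with
    | zero => simpa using h1.symm
    | succ k ih =>
      rw [pow_succ, ih, hmul]
      congr 1 <;> ring
  -- products of monos
  have mono_prod : ∀ (s : Finset (Fin (r + 1))) (f g : Fin (r + 1) → ℕ),
      ∏ i ∈ s, mono (f i) (g i) = mono (∑ i ∈ s, f i) (∑ i ∈ s, g i) := by
    intro s f g
    induction s using Finset.induction with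
    | empty => simpa using h1.symm
    | insert _ _ hni ih =>
      rw [Finset.prod_insert hni, Finset.sum_insert hni, Finset.sum_insert hni, ih, hmul]
  -- products of powers in powers of ideals
  have prodpow_mem : ∀ (s : Finset (Fin (r + 1))) (x : Fin (r + 1) → R) (c : Fin (r + 1) → ℕ),
      (∀ i, x i ∈ I) → (∏ i ∈ s, x i ^ c i) ∈ I ^ (∑ i ∈ s, c i) := by
    intro s x c hx
    induction s using Finset.induction with
    | empty => simp [Ideal.one_eq_top]
    | insert _ _ hni ih =>
      rw [Finset.prod_insert hni, Finset.sum_insert hni, pow_add]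
      exact Ideal.mul_mem_mul (Ideal.pow_mem_pow (hx _) _) ih
  have hgen : ∀ i, mono (a i) (b i) ∈ I := fun i => by
    rw [hI]; exact Ideal.subset_span ⟨i, rfl⟩
  have mem_pow : ∀ c : Fin (r + 1) → ℕ,
      mono (∑ i, c i * a i) (∑ i, c i * b i) ∈ I ^ (∑ i, c i) := by
    intro c
    have := prodpow_mem Finset.univ (fun i => mono (a i) (b i)) c hgen
    have heq : ∏ i, mono (a i) (b i) ^ c i = mono (∑ i, c i * a i) (∑ i, c i * b i) := by
      rw [← mono_prod]
      exact Finset.prod_congr rfl fun i _ => mono_pow _ _ _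
    rwa [heq] at this
  -- the key linear identity
  have key : ∀ c : Fin (r + 1) → ℕ,
      B * (∑ i, c i * a i) + A * (∑ i, c i * b i) = A * B * (∑ i, c i) := by
    intro c
    rw [Finset.mul_sum, Finset.mul_sum, Finset.mul_sum, ← Finset.sum_add_distrib]
    refine Finset.sum_congr rfl fun i _ => ?_
    calc B * (c i * a i) + A * (c i * b i) = c i * (B * a i + A * b i) := by ring
      _ = c i * (A * B) := by rw [hcond i]
      _ = A * B * c i := by ring
  -- divisibility step
  have step : ∀ {s₀ t₀ s u n : ℕ}, mono s₀ t₀ ∈ I ^ n → s₀ ≤ s → t₀ ≤ u → mono s u ∈ I ^ n := by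
    intro s₀ t₀ s u n h hs ht
    have : mono s u = mono s₀ t₀ * mono (s - s₀) (u - t₀) := by
      rw [hmul]; congr 1 <;> omega
    rw [this]
    exact Ideal.mul_mem_right _ _ h
  -- representations from closure
  have rep : ∀ s : ℕ, s ∈ AddSubmonoid.closure (Set.range a) →
      ∃ c : Fin (r + 1) → ℕ, (∑ i, c i * a i) = s ∧ c 0 = 0 := by
    intro s hs
    have base : ∃ c : Fin (r + 1) → ℕ, (∑ i, c i * a i) = s := by
      induction hs using AddSubmonoid.closure_induction with
      | mem x hx =>
        obtain ⟨i, rfl⟩ := hx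
        exact ⟨Pi.single i 1, by simp [Pi.single_apply, Finset.sum_ite_eq']⟩
      | zero => exact ⟨0, by simp⟩
      | add x y _ _ hx hy =>
        obtain ⟨c, hc⟩ := hx; obtain ⟨d, hd⟩ := hy
        exact ⟨c + d, by simp [Pi.add_apply, add_mul, Finset.sum_add_distrib, hc, hd]⟩
    obtain ⟨c, hc⟩ := base
    refine ⟨Function.update c 0 0, ?_, Function.update_self _ _ _⟩
    rw [← hc]
    refine Finset.sum_congr rfl fun j _ => ?_
    by_cases hj : j = 0
    · subst hj; simp [ha0]
    · rw [Function.update_of_ne hj]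
  -- normalization: short representations
  have normalize : ∀ (n : ℕ) (c : Fin (r + 1) → ℕ), c 0 = 0 → (∑ i, c i) = n →
      ∃ c' : Fin (r + 1) → ℕ, (∑ i, c' i * a i) = (∑ i, c i * a i) ∧
        A * (∑ i, c' i) ≤ (∑ i, c i * a i) + A * A * (r + 1) := by
    intro n
    induction n using Nat.strong_induction_on with
    | _ n ih =>
      intro c hc0 hcn
      by_cases hex : ∃ i, i ≠ 0 ∧ i ≠ Fin.last r ∧ A ≤ c i
      · obtain ⟨i, hi0, hilst, hAc⟩ := hex
        have hilt : i < Fin.last r := lt_of_le_of_ne (Fin.le_last i) hilst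
        have hai : a i < A := hamono hilt
        set c' : Fin (r + 1) → ℕ :=
          Function.update (Function.update c i (c i - A)) (Fin.last r) (c (Fin.last r) + a i)
          with hc'def
        have hmem : i ∈ Finset.univ.erase (Fin.last r) :=
          Finset.mem_erase.mpr ⟨hilst, Finset.mem_univ i⟩
        have split : ∀ g : Fin (r + 1) → ℕ, (∑ j, g j) =
            g (Fin.last r) + (g i + ∑ j ∈ (Finset.univ.erase (Fin.last r)).erase i, g j) := by
          intro g
          rw [Finset.add_sum_erase _ g hmem, Finset.add_sum_erase _ g (Finset.mem_univ _)]
        have hc'vals : ∀ j, j ≠ i → j ≠ Fin.last r → c' j = c j := by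
          intro j hji hjl
          rw [hc'def, Function.update_of_ne hjl, Function.update_of_ne hji]
        have hc'i : c' i = c i - A := by
          rw [hc'def, Function.update_of_ne hilst, Function.update_self]
        have hc'l : c' (Fin.last r) = c (Fin.last r) + a i := by
          rw [hc'def, Function.update_self]
        have htail : ∀ (w : Fin (r + 1) → ℕ),
            (∑ j ∈ (Finset.univ.erase (Fin.last r)).erase i, c' j * w j)
            = ∑ j ∈ (Finset.univ.erase (Fin.last r)).erase i, c j * w j := by
          intro w
          refine Finset.sum_congr rfl fun j hj => ?_
          have hji := (Finset.mem_erase.mp hj).1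
          have hjl := (Finset.mem_erase.mp (Finset.mem_erase.mp hj).2).1
          rw [hc'vals j hji hjl]
        obtain ⟨d, hd⟩ := Nat.exists_eq_add_of_le hAc
        -- weighted sum preserved
        have hwsum : (∑ j, c' j * a j) = ∑ j, c j * a j := by
          rw [split (fun j => c' j * a j), split (fun j => c j * a j), htail a]
          simp only [hc'i, hc'l]
          rw [hd]
          have : A + d - A = d := by omega
          rw [this]
          ring
        -- count decreases
        have htail1 : (∑ j ∈ (Finset.univ.erase (Fin.last r)).erase i, c' j)
            = ∑ j ∈ (Finset.univ.erase (Fin.last r)).erase i, c j := by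
          refine Finset.sum_congr rfl fun j hj => ?_
          have hji := (Finset.mem_erase.mp hj).1
          have hjl := (Finset.mem_erase.mp (Finset.mem_erase.mp hj).2).1
          rw [hc'vals j hji hjl]
        have hcount : (∑ j, c' j) + A = (∑ j, c j) + a i := by
          rw [split c', split c, htail1, hc'i, hc'l, hd]
          omega
        have hlt : (∑ j, c' j) < n := by omega
        have hc'0 : c' 0 = 0 := by
          rw [hc'vals 0 (Ne.symm hi0) (Fin.ne_of_lt h0last)]
          exact hc0
        obtain ⟨c'', h1'', h2''⟩ := ih _ hlt c' hc'0 rfl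
        exact ⟨c'', by rw [h1'', hwsum], by rw [hwsum] at h2''; exact h2''⟩
      · push_neg at hex
        refine ⟨c, rfl, ?_⟩
        have hsplit : (∑ j, c j) = c (Fin.last r) + ∑ j ∈ Finset.univ.erase (Fin.last r), c j :=
          (Finset.add_sum_erase _ c (Finset.mem_univ _)).symm
        have h2 : (∑ j ∈ Finset.univ.erase (Fin.last r), c j) ≤ (r + 1) * A := by
          calc (∑ j ∈ Finset.univ.erase (Fin.last r), c j)
              ≤ ∑ _j ∈ Finset.univ.erase (Fin.last r), A := by
                refine Finset.sum_le_sum fun j hj => ?_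
                have hjl := (Finset.mem_erase.mp hj).1
                by_cases hj0 : j = 0
                · subst hj0; rw [hc0]; omega
                · exact le_of_lt (hex j hj0 hjl)
            _ ≤ ∑ _j : Fin (r + 1), A :=
                Finset.sum_le_sum_of_subset (Finset.erase_subset _ _)
            _ = (r + 1) * A := by simp [Finset.sum_const, mul_comm]
        have h3 : c (Fin.last r) * A ≤ ∑ j, c j * a j :=
          Finset.single_le_sum (f := fun j => c j * a j) (fun _ _ => Nat.zero_le _)
            (Finset.mem_univ (Fin.last r))
        calc A * (∑ j, c j) = c (Fin.last r) * A + A * ∑ j ∈ Finset.univ.erase (Fin.last r), c j := by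
              rw [hsplit]; ring
          _ ≤ (∑ j, c j * a j) + A * ((r + 1) * A) :=
              add_le_add h3 (Nat.mul_le_mul_left A h2)
          _ = (∑ j, c j * a j) + A * A * (r + 1) := by ring
  -- main proof
  intro l hl s u hs hsu hline
  rcases le_or_gt (A * l) s with hcase | hcase
  · -- s ≥ A·l : use l copies of the generator (A, 0)
    have hgl : mono (l * A) (l * 0) ∈ I ^ l := by
      rw [← mono_pow]
      exact Ideal.pow_mem_pow (by simpa [hbr] using hgen (Fin.last r)) l
    refine step hgl ?_ ?_
    · rw [mul_comm] at hcase; simpa using hcase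
    · simp
  · rcases le_or_gt (A * B * l + A * B) (B * s + A * u) with hslack | hslack
    · -- big slack : use ⌊s/A⌋ copies of (A,0) and the rest copies of (0,B)
      have hm : s / A < l := (Nat.div_lt_iff_lt_mul hA).mpr (by rw [mul_comm] at hcase; exact hcase)
      have hmem2 : mono (s / A * A + (l - s / A) * 0) (s / A * 0 + (l - s / A) * B)
          ∈ I ^ (s / A + (l - s / A)) := by
        rw [pow_add, ← hmul, ← mono_pow, ← mono_pow]
        exact Ideal.mul_mem_mul
          (Ideal.pow_mem_pow (by simpa [hbr] using hgen (Fin.last r)) (s / A))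
          (Ideal.pow_mem_pow (by simpa [ha0] using hgen 0) (l - s / A))
      have hml : s / A + (l - s / A) = l := by omega
      rw [hml] at hmem2
      simp only [mul_zero, add_zero, zero_add, Nat.zero_add] at hmem2
      refine step hmem2 ?_ ?_
      · exact Nat.div_mul_le_self s A
      · -- (l - s/A) * B ≤ u
        obtain ⟨d, hd⟩ : ∃ d, l = s / A + d := ⟨l - s / A, by omega⟩
        have hld : l - s / A = d := by omega
        rw [hld]
        have hsm : s < A * (s / A) + A := by
          have h1 := Nat.div_add_mod s A
          have h2 := Nat.mod_lt s hA
          linarith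
        have hBs : B * (s + 1) ≤ B * (A * (s / A) + A) := Nat.mul_le_mul_left B hsm
        have hexp : A * B * l = A * B * (s / A) + A * B * d := by rw [hd]; ring
        have hfin : A * (d * B) ≤ A * u := by linarith
        exact Nat.le_of_mul_le_mul_left hfin hA
    · -- small slack : use a short representation of s
      obtain ⟨c, hc, hc0⟩ := rep s hs
      obtain ⟨c', hc'sum, hc'len⟩ := normalize (∑ i, c i) c hc0 rfl
      rw [hc] at hc'sum hc'len
      set n := ∑ i, c' i with hndef
      set D := A * A * (r + 1) with hDdef
      -- n ≤ l
      have hnl : n ≤ l := by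
        have h2s : 2 * s < A * l + A := by
          have h1 : B * (2 * s) < B * (A * l + A) := by
            calc B * (2 * s) = B * s + B * s := by ring
              _ ≤ B * s + A * u := by linarith
              _ < A * B * l + A * B := hslack
              _ = B * (A * l + A) := by ring
          exact Nat.lt_of_mul_lt_mul_left h1
        obtain ⟨l', hl'⟩ : ∃ l', l = l' + 1 := ⟨l - 1, by omega⟩
        have hD : D ≤ C * C * (r + 1) := by
          rw [hDdef]
          exact Nat.mul_le_mul_right _ (Nat.mul_le_mul hC hC)
        have h3 : 2 * (C * C * (r + 1)) ≤ l' := by omega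
        have h4 : l' ≤ A * l' := Nat.le_mul_of_pos_left _ hA
        have hexp : A * l = A * l' + A := by rw [hl']; ring
        have hfin : A * n ≤ A * l := by linarith [hc'len]
        exact Nat.le_of_mul_le_mul_left hfin hA
      set T := ∑ i, c' i * b i with hTdef
      have hmem3 : mono (s + (l - n) * 0) (T + (l - n) * B) ∈ I ^ (n + (l - n)) := by
        rw [pow_add, ← hmul, ← mono_pow]
        refine Ideal.mul_mem_mul ?_ (Ideal.pow_mem_pow (by simpa [ha0] using hgen 0) (l - n))
        have := mem_pow c'
        rwa [hc'sum] at this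
      have hnlm : n + (l - n) = l := by omega
      rw [hnlm] at hmem3
      simp only [mul_zero, add_zero] at hmem3
      refine step hmem3 le_rfl ?_
      -- T + (l - n)·B ≤ u
      have hkey : B * s + A * T = A * B * n := by
        have := key c'
        rwa [hc'sum] at this
      have htot : A * (T + (l - n) * B) + B * s = A * B * l := by
        obtain ⟨d, hld⟩ : ∃ d, l = n + d := ⟨l - n, by omega⟩
        subst hld
        have : n + d - n = d := by omega
        rw [this]
        calc A * (T + d * B) + B * s = (B * s + A * T) + A * B * d := by ring
          _ = A * B * n + A * B * d := by rw [hkey]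
          _ = A * B * (n + d) := by ring
      have hfin2 : A * (T + (l - n) * B) ≤ A * u := by linarith [htot, hline]
      exact Nat.le_of_mul_le_mul_left hfin2 hA

theorem stmt12 {K : Type*} [Field K] {r : ℕ} (hr : 1 ≤ r) (a b : Fin (r + 1) → ℕ)
    (ha0 : a 0 = 0) (hamono : StrictMono a)
    (hbr : b (Fin.last r) = 0) (hbanti : StrictAnti b)
    (hcond : ∀ i, b 0 * a i + a (Fin.last r) * b i = a (Fin.last r) * b 0)
    (I : Ideal (MvPolynomial (Fin 2) K))
    (hI : I = Ideal.span (Set.range fun i => X 0 ^ a i * X 1 ^ b i)) :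
    ∃ L : ℕ, ∀ l : ℕ, L ≤ l →
      (I ^ l = Ideal.span {m : MvPolynomial (Fin 2) K | ∃ s t : ℕ,
          s ∈ AddSubmonoid.closure (Set.range a) ∧
          t ∈ AddSubmonoid.closure (Set.range b) ∧
          b 0 * s + a (Fin.last r) * t = a (Fin.last r) * b 0 * l ∧
          m = X 0 ^ s * X 1 ^ t}) ∧
      (∀ s u : ℕ, s ∈ AddSubmonoid.closure (Set.range a) →
        b 0 * s ≤ a (Fin.last r) * u →
        a (Fin.last r) * b 0 * l ≤ b 0 * s + a (Fin.last r) * u →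
        X 0 ^ s * X 1 ^ u ∈ I ^ l) ∧
      (∀ t v : ℕ, t ∈ AddSubmonoid.closure (Set.range b) →
        a (Fin.last r) * t ≤ b 0 * v →
        a (Fin.last r) * b 0 * l ≤ a (Fin.last r) * t + b 0 * v →
        X 0 ^ v * X 1 ^ t ∈ I ^ l) := by
  classical
  set A := a (Fin.last r) with hAdef
  set B := b 0 with hBdef
  set C := A + B with hCdef
  refine ⟨2 * (C * C * (r + 1)) + 2, fun l hl => ?_⟩
  have hmul1 : ∀ s t s' t' : ℕ, (X 0 ^ s * X 1 ^ t : MvPolynomial (Fin 2) K) * (X 0 ^ s' * X 1 ^ t')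
      = X 0 ^ (s + s') * X 1 ^ (t + t') := by
    intro s t s' t'; rw [pow_add, pow_add]; ring
  -- part (1)
  have part1 := aux_stmt12 hr a b ha0 hamono hbr hbanti hcond
    (fun s t => X 0 ^ s * X 1 ^ t) (by simp) hmul1 I hI C (by omega) l hl
  -- part (2) via the reversed data
  have hrevsurj : Function.Surjective (Fin.rev : Fin (r + 1) → Fin (r + 1)) :=
    Fin.rev_surjective
  have ha0' : b (Fin.rev (0 : Fin (r + 1))) = 0 := by rw [Fin.rev_zero]; exact hbr
  have hamono' : StrictMono fun i : Fin (r + 1) => b i.rev := fun i j h =>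
    hbanti (Fin.rev_lt_rev.mpr h)
  have hbr' : a (Fin.rev (Fin.last r)) = 0 := by rw [Fin.rev_last]; exact ha0
  have hbanti' : StrictAnti fun i : Fin (r + 1) => a i.rev := fun i j h =>
    hamono (Fin.rev_lt_rev.mpr h)
  have hcond' : ∀ i : Fin (r + 1), a (Fin.rev (0 : Fin (r + 1))) * b i.rev
      + b (Fin.rev (Fin.last r)) * a i.rev
      = b (Fin.rev (Fin.last r)) * a (Fin.rev (0 : Fin (r + 1))) := by
    intro i
    rw [Fin.rev_zero, Fin.rev_last]
    have := hcond i.rev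
    linarith
  have hrange_b : Set.range (fun i : Fin (r + 1) => b i.rev) = Set.range b := by
    exact Function.Surjective.range_comp hrevsurj b
  have hrange_a : Set.range (fun i : Fin (r + 1) => a i.rev) = Set.range a := by
    exact Function.Surjective.range_comp hrevsurj a
  have hI' : I = Ideal.span (Set.range fun i : Fin (r + 1) =>
      (fun s t => X 1 ^ s * X 0 ^ t : ℕ → ℕ → MvPolynomial (Fin 2) K) (b i.rev) (a i.rev)) := by
    rw [hI]
    congr 1
    have : (fun i : Fin (r + 1) => (X 1 : MvPolynomial (Fin 2) K) ^ b i.rev * X 0 ^ a i.rev)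
        = (fun i => (X 0 : MvPolynomial (Fin 2) K) ^ a i * X 1 ^ b i) ∘ Fin.rev := by
      funext i; exact mul_comm _ _
    rw [this, Function.Surjective.range_comp hrevsurj]
  have hmul2 : ∀ s t s' t' : ℕ, (X 1 ^ s * X 0 ^ t : MvPolynomial (Fin 2) K) * (X 1 ^ s' * X 0 ^ t')
      = X 1 ^ (s + s') * X 0 ^ (t + t') := by
    intro s t s' t'; rw [pow_add, pow_add]; ring
  have part2' := aux_stmt12 hr (fun i : Fin (r + 1) => b i.rev) (fun i : Fin (r + 1) => a i.rev)
    ha0' hamono' hbr' hbanti' hcond'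
    (fun s t => X 1 ^ s * X 0 ^ t) (by simp) hmul2 I hI'
    C (by show b (Fin.rev (Fin.last r)) ≤ C; rw [Fin.rev_last]; omega) l hl
  have part2 : ∀ t v : ℕ, t ∈ AddSubmonoid.closure (Set.range b) →
      A * t ≤ B * v → A * B * l ≤ A * t + B * v →
      (X 0 : MvPolynomial (Fin 2) K) ^ v * X 1 ^ t ∈ I ^ l := by
    intro t v ht h1 h2
    have ht' : t ∈ AddSubmonoid.closure (Set.range fun i : Fin (r + 1) => b i.rev) := by
      rwa [hrange_b]
    have := part2' t v ht'
      (by show a (Fin.rev 0) * t ≤ b (Fin.rev (Fin.last r)) * v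
          rw [Fin.rev_zero, Fin.rev_last]; exact h1)
      (by show b (Fin.rev (Fin.last r)) * a (Fin.rev 0) * l
            ≤ a (Fin.rev 0) * t + b (Fin.rev (Fin.last r)) * v
          rw [Fin.rev_zero, Fin.rev_last]
          show B * A * l ≤ A * t + B * v
          linarith)
    have h3 : (X 1 : MvPolynomial (Fin 2) K) ^ t * X 0 ^ v ∈ I ^ l := this
    rw [mul_comm] at h3
    exact h3
  refine ⟨?_, part1, part2⟩
  -- the span equality
  apply le_antisymm
  · -- I ^ l ⊆ span, by induction (holds for all l)
    have main : ∀ l : ℕ, I ^ l ≤ Ideal.span {m : MvPolynomial (Fin 2) K | ∃ s t : ℕ,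
        s ∈ AddSubmonoid.closure (Set.range a) ∧
        t ∈ AddSubmonoid.closure (Set.range b) ∧
        B * s + A * t = A * B * l ∧
        m = X 0 ^ s * X 1 ^ t} := by
      intro l
      induction l with
      | zero =>
        rw [pow_zero, Ideal.one_eq_top]
        refine le_of_eq ((Ideal.eq_top_iff_one _).mpr ?_).symm
        exact Ideal.subset_span ⟨0, 0, zero_mem _, zero_mem _, by simp, by simp⟩
      | succ l ih =>
        open Pointwise in
        calc I ^ (l + 1) = I ^ l * I := pow_succ I l
          _ ≤ Ideal.span _ * Ideal.span (Set.range fun i => X 0 ^ a i * X 1 ^ b i) :=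
              Ideal.mul_mono ih (le_of_eq hI)
          _ = Ideal.span ({m : MvPolynomial (Fin 2) K | ∃ s t : ℕ,
                s ∈ AddSubmonoid.closure (Set.range a) ∧
                t ∈ AddSubmonoid.closure (Set.range b) ∧
                B * s + A * t = A * B * l ∧
                m = X 0 ^ s * X 1 ^ t} * Set.range fun i => X 0 ^ a i * X 1 ^ b i) :=
              Ideal.span_mul_span' _ _
          _ ≤ _ := by
              rw [Ideal.span_le]
              rintro x hx
              rw [Set.mem_mul] at hx
              obtain ⟨p, ⟨s, t, hs, ht, hlin, rfl⟩, q, ⟨i, rfl⟩, rfl⟩ := hx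
              refine Ideal.subset_span ⟨s + a i, t + b i,
                add_mem hs (AddSubmonoid.subset_closure ⟨i, rfl⟩),
                add_mem ht (AddSubmonoid.subset_closure ⟨i, rfl⟩), ?_, ?_⟩
              · calc B * (s + a i) + A * (t + b i)
                    = (B * s + A * t) + (B * a i + A * b i) := by ring
                  _ = A * B * l + A * B := by rw [hlin, hcond i]
                  _ = A * B * (l + 1) := by ring
              · rw [pow_add, pow_add]; ring
    exact main l
  · rw [Ideal.span_le]
    rintro m ⟨s, t, hs, ht, hlin, rfl⟩
    rcases le_total (B * s) (A * t) with hle | hle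
    · exact part1 s t hs hle (le_of_eq hlin.symm)
    · exact part2 t s ht hle (le_of_eq (by rw [← hlin, add_comm]))
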